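/- Suppose N_n = (1/9)(d1·10^{m1+m2} − (d1−d2)·10^{m2} − d2) with 1 ≤ d1 ≤ 9, 0 ≤ d2 ≤ 9, m1 ≥ m2 ≥ 1, and n > 250. Then |9a·α^n − (d1·10^{m1} − (d1−d2))·10^{m2}| < 18. -/
import Mathlib


def narayana : ℕ → ℕ
  | 0 => 0
  | 1 => 1
  | 2 => 1
  | n + 3 => narayana (n + 2) + narayana n

lemma narayana_approx (α : ℝ) (hα : α ^ 3 = α ^ 2 + 1)
    (a : ℝ) (ha : a = α ^ 2 / (α ^ 3 + 2)) (n : ℕ) :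
    |(narayana n : ℝ) - a * α ^ n| < 1 := by
  have hl : 1.46 < α := by
    nlinarith [sq_nonneg (α - 1.46), sq_nonneg (α + 1), sq_nonneg α, sq_nonneg (α - 1)]
  have hu : α < 1.47 := by
    nlinarith [sq_nonneg (α - 1.47), sq_nonneg (α + 1), sq_nonneg α]
  have hα0 : (0:ℝ) < α := by linarith
  have hne : α ^ 3 + 2 ≠ 0 := by nlinarith
  have ha' : a * (α ^ 3 + 2) = α ^ 2 := by rw [ha]; field_simp
  have hal : 0.41 < a := by nlinarith
  have hau : a < 0.43 := by nlinarith
  obtain ⟨E, hE⟩ : ∃ E : ℕ → ℝ, ∀ k, E k = (narayana k : ℝ) - a * α ^ k :=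
    ⟨_, fun _ => rfl⟩
  have hE0 : E 0 = -a := by rw [hE]; norm_num [narayana]
  have hE1 : E 1 = 1 - a * α := by rw [hE]; norm_num [narayana]
  have hE2 : E 2 = 1 - a * α ^ 2 := by rw [hE]; norm_num [narayana]
  have hcubic : ∀ k, E (k + 3) = E (k + 2) + E k := by
    intro k
    have h1 : (narayana (k+3) : ℝ) = narayana (k+2) + narayana k := by
      rw [show narayana (k+3) = narayana (k+2) + narayana k from rfl]; push_cast; ring
    rw [hE, hE, hE, h1]
    have : α ^ (k+3) = α ^ (k+2) + α ^ k := by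
      have : α ^ (k+3) = α ^ k * α ^ 3 := by ring
      rw [this, hα]; ring
    rw [this]; ring
  have hquad : ∀ k, α * E (k + 2) = α * (1 - α) * E (k + 1) - E k := by
    intro k
    induction k with
    | zero =>
      rw [hE0, hE1, hE2]
      linear_combination -ha' - a * hα
    | succ m ih =>
      have hc := hcubic m
      rw [hc]
      linear_combination α * ih - E (m + 1) * hα
  obtain ⟨R, hR⟩ : ∃ R : ℕ → ℝ, ∀ k,
      R k = (E k) ^ 2 + α * (α - 1) * E k * E (k + 1) + α * (E (k + 1)) ^ 2 :=
    ⟨_, fun _ => rfl⟩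
  have hRstep : ∀ k, α * R (k + 1) = R k := by
    intro k
    rw [hR, hR]
    linear_combination (α * E (k + 2) - E k) * hquad k
  have hRnonneg : ∀ k, 0 ≤ R k := by
    intro k
    rw [hR]
    have key : (0:ℝ) ≤ 4 * α - α ^ 2 * (α - 1) ^ 2 := by nlinarith
    have hiden : E k ^ 2 + α * (α - 1) * E k * E (k + 1) + α * E (k + 1) ^ 2 =
        (E k + α * (α - 1) / 2 * E (k + 1)) ^ 2 +
          (4 * α - α ^ 2 * (α - 1) ^ 2) / 4 * E (k + 1) ^ 2 := by ring
    rw [hiden]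
    have key2 := mul_nonneg key (sq_nonneg (E (k + 1)))
    have key3 := sq_nonneg (E k + α * (α - 1) / 2 * E (k + 1))
    linarith
  have hRle : ∀ k, R k ≤ R 0 := by
    intro k
    induction k with
    | zero => exact le_rfl
    | succ m ih =>
      have h1 := hRstep m
      have h2 := hRnonneg (m + 1)
      nlinarith
  have hR0 : R 0 < 0.35 := by
    rw [hR, hE0, hE1]
    nlinarith [sq_nonneg (a - 0.42), sq_nonneg (α - 1.466), mul_pos hα0 hα0]
  have hEn2 : (E n) ^ 2 < 1 := by
    have h1 := hRle n
    have h2 : (1 - α * (α - 1) ^ 2 / 4) * (E n) ^ 2 ≤ R n := by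
      rw [hR]
      nlinarith [sq_nonneg (E (n + 1) + (α - 1) / 2 * E n), sq_nonneg (E n)]
    by_contra hcon
    push_neg at hcon
    have hc : α * (α - 1) ^ 2 < 0.4 := by nlinarith
    have hpos : (0:ℝ) ≤ 1 - α * (α - 1) ^ 2 / 4 := by nlinarith
    have h4 : (1 - α * (α - 1) ^ 2 / 4) * 1 ≤ (1 - α * (α - 1) ^ 2 / 4) * (E n) ^ 2 :=
      mul_le_mul_of_nonneg_left hcon hpos
    linarith
  have habs : |E n| < 1 := by
    rw [abs_lt]
    constructor <;> nlinarith [sq_nonneg (E n - 1), sq_nonneg (E n + 1)]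
  rw [show (narayana n : ℝ) - a * α ^ n = E n from (hE n).symm]
  exact habs

/-- Second key estimate: `|9 a α^n - (d1 10^(m1) - (d1 - d2)) 10^(m2)| < 18`. -/
theorem second_estimate (α : ℝ) (hα : α ^ 3 = α ^ 2 + 1)
    (a : ℝ) (ha : a = α ^ 2 / (α ^ 3 + 2))
    (n d1 d2 m1 m2 : ℕ) (hn : 250 < n)
    (hd1 : 1 ≤ d1) (hd1' : d1 ≤ 9) (hd2 : d2 ≤ 9) (hm : m2 ≤ m1) (hm2 : 1 ≤ m2)
    (heq : 9 * (narayana n : ℝ) =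
      (d1 : ℝ) * 10 ^ (m1 + m2) - ((d1 : ℝ) - (d2 : ℝ)) * 10 ^ m2 - (d2 : ℝ)) :
    |9 * a * α ^ n - ((d1 : ℝ) * 10 ^ m1 - ((d1 : ℝ) - (d2 : ℝ))) * 10 ^ m2| < 18 := by
  have key := narayana_approx α hα a ha n
  rw [abs_lt] at key
  have hX : ((d1 : ℝ) * 10 ^ m1 - ((d1 : ℝ) - (d2 : ℝ))) * 10 ^ m2 =
      9 * (narayana n : ℝ) + (d2 : ℝ) := by
    rw [heq, pow_add]; ring
  have hd2r : (d2 : ℝ) ≤ 9 := by exact_mod_cast hd2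
  have hd2r' : (0 : ℝ) ≤ (d2 : ℝ) := Nat.cast_nonneg _
  rw [hX, abs_lt]
  constructor <;> nlinarith [key.1, key.2]
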